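/- Let l > 0, τ > s, and ξ, x be real. Then (1/(2l))·∑_{n∈ℤ} exp(−π²n²(τ−s)/l²)·(πn/l)·sin(πn(x−ξ)/l) = (1/(4√(π(τ−s)³)))·∑_{n∈ℤ} (x−ξ+2nl)·exp(−(x−ξ+2nl)²/(4(τ−s))). -/

import Mathlib

open Real Complex

theorem stmt_7 (l τ s x ξ : ℝ) (hl : 0 < l) (hτs : s < τ) :
    (1 / (2 * l)) * ∑' n : ℤ,
        Real.exp (-π ^ 2 * n ^ 2 * (τ - s) / l ^ 2) * (π * n / l) * Real.sin (π * n * (x - ξ) / l)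
      = (1 / (4 * Real.sqrt (π * (τ - s) ^ 3))) * ∑' n : ℤ,
          (x - ξ + 2 * n * l) * Real.exp (-(x - ξ + 2 * n * l) ^ 2 / (4 * (τ - s))) := by
  set t : ℝ := τ - s with htdef
  set u : ℝ := x - ξ with hudef
  have ht : 0 < t := sub_pos.2 hτs
  clear_value t u
  have hl0 : (l:ℂ) ≠ 0 := Complex.ofReal_ne_zero.2 hl.ne'
  have ht0 : (t:ℂ) ≠ 0 := Complex.ofReal_ne_zero.2 ht.ne'
  have hpi0 : (π:ℂ) ≠ 0 := Complex.ofReal_ne_zero.2 pi_pos.ne'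
  have hs0 : Real.sqrt (π*t) ≠ 0 := (Real.sqrt_pos.2 (by positivity)).ne'
  have hs0c : ((Real.sqrt (π*t) : ℝ) : ℂ) ≠ 0 := Complex.ofReal_ne_zero.2 hs0
  set S₁ : ℝ := ∑' n : ℤ,
      Real.exp (-π ^ 2 * (n:ℝ) ^ 2 * t / l ^ 2) * (π * (n:ℝ) / l) * Real.sin (π * (n:ℝ) * u / l)
    with hS₁def
  set S₂ : ℝ := ∑' n : ℤ, (u + 2 * (n:ℝ) * l) * Real.exp (-(u + 2 * (n:ℝ) * l) ^ 2 / (4 * t))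
    with hS₂def
  set Z : ℂ := ((u / (2*l) : ℝ) : ℂ) with hZ
  set T : ℂ := ((π * t / l^2 : ℝ) : ℂ) * I with hT
  set W : ℂ := -(((u * l / (2*π*t) : ℝ) : ℂ) * I) with hW
  set U : ℂ := ((l^2 / (π*t) : ℝ) : ℂ) * I with hU
  have hT0 : T ≠ 0 := by
    rw [hT]
    simp only [ne_eq, mul_eq_zero, Complex.ofReal_eq_zero, I_ne_zero, or_false]
    positivity
  have hTim : 0 < T.im := by
    rw [hT]
    simp only [Complex.mul_im, Complex.ofReal_re, Complex.ofReal_im, Complex.I_re, Complex.I_im,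
      mul_one, mul_zero, add_zero, zero_mul]
    positivity
  have hUim : 0 < U.im := by
    rw [hU]
    simp only [Complex.mul_im, Complex.ofReal_re, Complex.ofReal_im, Complex.I_re, Complex.I_im,
      mul_one, mul_zero, add_zero, zero_mul]
    positivity
  -- Part A : the left-hand sum as a theta value
  have hterm : ∀ n : ℤ, jacobiTheta₂'_term n Z T + jacobiTheta₂'_term (-n) Z T
      = (-4*l) * ((Real.exp (-π^2*(n:ℝ)^2*t/l^2) * (π*(n:ℝ)/l) * Real.sin (π*(n:ℝ)*u/l) : ℝ) : ℂ) := by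
    intro n
    simp only [jacobiTheta₂'_term, jacobiTheta₂_term]
    have e1 : 2*(π:ℂ)*I*(n:ℂ)*Z + (π:ℂ)*I*(n:ℂ)^2*T
        = ((-π^2*(n:ℝ)^2*t/l^2 : ℝ) : ℂ) + ((π*(n:ℝ)*u/l : ℝ) : ℂ)*I := by
      rw [hZ, hT]; push_cast
      linear_combination ((π:ℂ)^2*(n:ℂ)^2*t/(l:ℂ)^2) * Complex.I_sq
    have e2 : 2*(π:ℂ)*I*((-n : ℤ):ℂ)*Z + (π:ℂ)*I*((-n : ℤ):ℂ)^2*T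
        = ((-π^2*(n:ℝ)^2*t/l^2 : ℝ) : ℂ) + ((-(π*(n:ℝ)*u/l) : ℝ) : ℂ)*I := by
      rw [hZ, hT]; push_cast
      linear_combination ((π:ℂ)^2*(n:ℂ)^2*t/(l:ℂ)^2) * Complex.I_sq
    rw [e1, e2, Complex.exp_add, Complex.exp_add, Complex.exp_mul_I, Complex.exp_mul_I]
    push_cast
    simp only [neg_div, Complex.cos_neg, Complex.sin_neg]
    field_simp
    linear_combination (4*(n:ℂ)
      * Complex.sin ((π:ℂ)*(n:ℂ)*(u:ℂ)/(l:ℂ))) * Complex.I_sq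
  have hsumA : Summable (jacobiTheta₂'_term · Z T) := (summable_jacobiTheta₂'_term_iff Z T).2 hTim
  have hsumA2 : Summable (fun n : ℤ => jacobiTheta₂'_term (-n) Z T) :=
    hsumA.comp_injective neg_injective
  have hnegA : ∑' n : ℤ, jacobiTheta₂'_term (-n) Z T = jacobiTheta₂' Z T := by
    rw [jacobiTheta₂']
    simpa using (Equiv.neg ℤ).tsum_eq (fun n => jacobiTheta₂'_term n Z T)
  have key1 : ((S₁ : ℝ) : ℂ) = jacobiTheta₂' Z T / (-2*l) := by
    have h2 : 2 * jacobiTheta₂' Z T = (-4*l) * ((S₁ : ℝ) : ℂ) := by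
      calc 2 * jacobiTheta₂' Z T = jacobiTheta₂' Z T + jacobiTheta₂' Z T := two_mul _
      _ = ∑' n : ℤ, jacobiTheta₂'_term n Z T + ∑' n : ℤ, jacobiTheta₂'_term (-n) Z T := by
          rw [hnegA, jacobiTheta₂']
      _ = ∑' n : ℤ, (jacobiTheta₂'_term n Z T + jacobiTheta₂'_term (-n) Z T) :=
          (Summable.tsum_add hsumA hsumA2).symm
      _ = ∑' n : ℤ, (-4*l) * ((Real.exp (-π^2*(n:ℝ)^2*t/l^2) * (π*(n:ℝ)/l)
            * Real.sin (π*(n:ℝ)*u/l) : ℝ) : ℂ) := tsum_congr hterm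
      _ = (-4*l) * ∑' n : ℤ, ((Real.exp (-π^2*(n:ℝ)^2*t/l^2) * (π*(n:ℝ)/l)
            * Real.sin (π*(n:ℝ)*u/l) : ℝ) : ℂ) := tsum_mul_left
      _ = (-4*l) * ((S₁ : ℝ) : ℂ) := by rw [hS₁def, ← Complex.ofReal_tsum]
    rw [eq_div_iff (by simpa using hl0 : (-2*(l:ℂ)) ≠ 0)]
    linear_combination (-1/2 : ℂ) * h2
  -- Part B : the transformed theta combination as the right-hand sum
  have hZT : Z / T = W := by
    rw [div_eq_iff hT0, hZ, hT, hW]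
    push_cast
    field_simp
    linear_combination (u:ℂ) * Complex.I_sq
  have hUT : -1 / T = U := by
    rw [div_eq_iff hT0, hT, hU]
    push_cast
    field_simp
    linear_combination (-1:ℂ) * Complex.I_sq
  have hAB : ((Real.exp (u^2/(4*t)) : ℝ) : ℂ) * ((Real.exp (-u^2/(4*t)) : ℝ) : ℂ) = 1 := by
    rw [← Complex.ofReal_mul, ← Real.exp_add,
      show u^2/(4*t) + -u^2/(4*t) = 0 by ring, Real.exp_zero, Complex.ofReal_one]
  have htermB : ∀ n : ℤ,
      jacobiTheta₂'_term (-n) W U - 2*π*I*Z*jacobiTheta₂_term (-n) W U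
      = (-(π*I/l)) * ((Real.exp (u^2/(4*t)) : ℝ) : ℂ)
          * (((u + 2*(n:ℝ)*l) * Real.exp (-(u + 2*(n:ℝ)*l)^2/(4*t)) : ℝ) : ℂ) := by
    intro n
    simp only [jacobiTheta₂'_term, jacobiTheta₂_term]
    have e3 : 2*(π:ℂ)*I*((-n : ℤ):ℂ)*W + (π:ℂ)*I*((-n : ℤ):ℂ)^2*U
        = ((-((n:ℝ)*u*l)/t - (n:ℝ)^2*l^2/t : ℝ) : ℂ) := by
      rw [hW, hU]; push_cast
      have hp : (π:ℂ) * (π:ℂ)⁻¹ = 1 := mul_inv_cancel₀ hpi0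
      linear_combination (I^2*(t:ℂ)⁻¹*((n:ℂ)*u*l + (n:ℂ)^2*l^2)) * hp
        + ((t:ℂ)⁻¹*((n:ℂ)*u*l + (n:ℂ)^2*l^2)) * Complex.I_sq
    have e4 : Real.exp (-(u + 2*(n:ℝ)*l)^2/(4*t))
        = Real.exp (-u^2/(4*t)) * Real.exp (-((n:ℝ)*u*l)/t - (n:ℝ)^2*l^2/t) := by
      rw [← Real.exp_add]
      congr 1
      field_simp
      ring
    rw [e3, e4, hZ]
    simp only [← Complex.ofReal_exp]
    simp only [Complex.ofReal_mul, Complex.ofReal_neg, Complex.ofReal_div, Complex.ofReal_add,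
      Complex.ofReal_sub, Complex.ofReal_pow, Complex.ofReal_ofNat, Complex.ofReal_intCast,
      Int.cast_neg]
    have hli : (l:ℂ) * (l:ℂ)⁻¹ = 1 := mul_inv_cancel₀ hl0
    linear_combination ((π:ℂ)*I*(l:ℂ)⁻¹*((u:ℂ) + 2*(n:ℂ)*l)
        *((Real.exp (-((n:ℝ)*u*l)/t - (n:ℝ)^2*l^2/t) : ℝ) : ℂ)) * hAB
      + (2*(π:ℂ)*I*(n:ℂ)*((Real.exp (-((n:ℝ)*u*l)/t - (n:ℝ)^2*l^2/t) : ℝ) : ℂ)) * hli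
  have hgsum : Summable (jacobiTheta₂'_term · W U) := (summable_jacobiTheta₂'_term_iff W U).2 hUim
  have hhsum : Summable (jacobiTheta₂_term · W U) := (summable_jacobiTheta₂_term_iff W U).2 hUim
  have key2 : jacobiTheta₂' W U - 2*π*I*Z*jacobiTheta₂ W U
      = (-(π*I/l)) * ((Real.exp (u^2/(4*t)) : ℝ) : ℂ) * ((S₂ : ℝ) : ℂ) := by
    calc jacobiTheta₂' W U - 2*π*I*Z*jacobiTheta₂ W U
        = ∑' n : ℤ, (jacobiTheta₂'_term n W U - 2*π*I*Z*jacobiTheta₂_term n W U) := by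
          rw [jacobiTheta₂', jacobiTheta₂, ← tsum_mul_left, Summable.tsum_sub hgsum (hhsum.mul_left _)]
      _ = ∑' n : ℤ, (jacobiTheta₂'_term (-n) W U - 2*π*I*Z*jacobiTheta₂_term (-n) W U) := by
          symm
          simpa using (Equiv.neg ℤ).tsum_eq
            (fun n => jacobiTheta₂'_term n W U - 2*π*I*Z*jacobiTheta₂_term n W U)
      _ = ∑' n : ℤ, ((-(π*I/l)) * Complex.ofReal (Real.exp (u^2/(4*t)))
            * Complex.ofReal ((u + 2*(n:ℝ)*l) * Real.exp (-(u + 2*(n:ℝ)*l)^2/(4*t)))) :=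
          tsum_congr htermB
      _ = ((-(π*I/l)) * Complex.ofReal (Real.exp (u^2/(4*t))))
            * ∑' n : ℤ, Complex.ofReal ((u + 2*(n:ℝ)*l) * Real.exp (-(u + 2*(n:ℝ)*l)^2/(4*t))) :=
          tsum_mul_left
      _ = _ := by rw [hS₂def, ← Complex.ofReal_tsum]
  -- Constants
  have c1 : -I * T = ((π * t / l^2 : ℝ) : ℂ) := by
    rw [hT]
    linear_combination (-((π * t / l^2 : ℝ) : ℂ)) * Complex.I_sq
  have c2 : ((π * t / l^2 : ℝ) : ℂ) ^ (1/2 : ℂ) = ((Real.sqrt (π*t) : ℝ) : ℂ) / (l:ℂ) := by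
    rw [show ((1:ℂ)/2) = ((1/2 : ℝ) : ℂ) by norm_num, ← Complex.ofReal_cpow (by positivity),
      show (π * t / l^2) ^ (1/2 : ℝ) = Real.sqrt (π*t) / l from ?_, Complex.ofReal_div]
    rw [show π * t / l^2 = (π*t) * (1/l)^2 by field_simp, ← Real.sqrt_eq_rpow,
      Real.sqrt_mul (by positivity), Real.sqrt_sq (by positivity)]
    field_simp
  have c3 : -(π:ℂ) * I * Z^2 / T = ((-u^2/(4*t) : ℝ) : ℂ) := by
    rw [div_eq_iff hT0, hT, hZ]
    push_cast
    field_simp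
    ring
  have hdivT : ∀ X : ℂ, X / T = X * (-((l:ℂ)^2/((π:ℂ)*(t:ℂ))) * I) := by
    intro X
    rw [div_eq_mul_inv]
    congr 1
    rw [← one_div, div_eq_iff hT0, hT]
    push_cast
    field_simp
    linear_combination Complex.I_sq
  -- Assembly
  have hfe := jacobiTheta₂'_functional_equation Z T
  rw [hZT, hUT, key2, c1, c2, c3, ← Complex.ofReal_exp, hdivT] at hfe
  have hθ : jacobiTheta₂' Z T
      = -((l:ℂ)^2/((t:ℂ)*((Real.sqrt (π*t) : ℝ) : ℂ))) * ((S₂ : ℝ) : ℂ) := by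
    rw [hfe]
    have hp : (π:ℂ) * (π:ℂ)⁻¹ = 1 := mul_inv_cancel₀ hpi0
    have hli : (l:ℂ) * (l:ℂ)⁻¹ = 1 := mul_inv_cancel₀ hl0
    set A : ℂ := ((Real.exp (u^2/(4*t)) : ℝ) : ℂ) with hA
    set B : ℂ := ((Real.exp (-u^2/(4*t)) : ℝ) : ℂ) with hB
    set s2 : ℂ := ((S₂ : ℝ) : ℂ) with hs2
    set sq : ℂ := ((Real.sqrt (π*t) : ℝ) : ℂ) with hsq
    have hinv : ((l:ℂ)⁻¹)⁻¹ = (l:ℂ) := inv_inv _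
    linear_combination (sq⁻¹*(l:ℂ)^2*(t:ℂ)⁻¹*s2*((l:ℂ)*(l:ℂ)⁻¹)*(A*B)*I^2) * hp
      + (sq⁻¹*(l:ℂ)^2*(t:ℂ)⁻¹*s2*(A*B)*I^2) * hli
      + (sq⁻¹*(l:ℂ)^2*(t:ℂ)⁻¹*s2*I^2) * hAB
      + (sq⁻¹*(l:ℂ)^2*(t:ℂ)⁻¹*s2) * Complex.I_sq
      + ((l:ℂ)^2*(l:ℂ)⁻¹*sq⁻¹*B*(π:ℂ)*(π:ℂ)⁻¹*(t:ℂ)⁻¹*I^2*A*s2) * hinv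
  have hre : S₁ = l/(2*t*Real.sqrt (π*t)) * S₂ := by
    have hfin : ((S₁ : ℝ) : ℂ) = ((l/(2*t*Real.sqrt (π*t)) * S₂ : ℝ) : ℂ) := by
      rw [key1, hθ]
      push_cast
      have hli : (l:ℂ) * (l:ℂ)⁻¹ = 1 := mul_inv_cancel₀ hl0
      linear_combination ((1/2:ℂ)*(l:ℂ)*((t:ℂ))⁻¹*(((Real.sqrt (π*t) : ℝ):ℂ))⁻¹*((S₂:ℝ):ℂ)) * hli
    exact_mod_cast hfin
  have hsq3 : Real.sqrt (π*t^3) = t * Real.sqrt (π*t) := by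
    rw [show π*t^3 = t^2*(π*t) by ring, Real.sqrt_mul (sq_nonneg t), Real.sqrt_sq ht.le]
  rw [hre, hsq3]
  rw [show (1:ℝ)/(2*l) * (l/(2*t*Real.sqrt (π*t)) * S₂) = (l*l⁻¹) * (1/(4*(t*Real.sqrt (π*t))) * S₂) by ring]
  rw [mul_inv_cancel₀ hl.ne', one_mul]
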